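/- For every integer q ≥ 2, the integrals I_{−q} = ∫_{1/4}^{1} t^{−q} (4t−1)^{−1/2} dt satisfy the recurrence I_{−q} = √3/(q−1) + (2(2q−3)/(q−1)) · I_{−(q−1)}. -/

import Mathlib

open intervalIntegral Real MeasureTheory Set

lemma aux_zpow_le (m : ℤ) {t : ℝ} (ht : 1/4 < t) (ht1 : t ≤ 1) :
    t ^ m ≤ (4 : ℝ) ^ m.natAbs := by
  have ht0 : (0:ℝ) < t := lt_trans (by norm_num) ht
  rcases m with n | n
  · simp only [Int.ofNat_eq_coe, Int.natAbs_natCast, zpow_natCast]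
    calc t ^ n ≤ 1 := pow_le_one₀ ht0.le ht1
    _ ≤ (4:ℝ) ^ n := one_le_pow₀ (by norm_num)
  · simp only [zpow_negSucc, Int.natAbs_negSucc]
    have h1 : ((1:ℝ)/4) ^ (n + 1) ≤ t ^ (n + 1) := pow_le_pow_left₀ (by norm_num) ht.le _
    have h2 : (0:ℝ) < ((1:ℝ)/4) ^ (n + 1) := pow_pos (by norm_num) _
    calc (t ^ (n+1))⁻¹ ≤ (((1:ℝ)/4) ^ (n+1))⁻¹ := by
          exact inv_anti₀ h2 h1
      _ = (4:ℝ) ^ (n+1) := by rw [one_div, inv_pow, inv_inv]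
    
lemma aux_integrable (m : ℤ) :
    IntervalIntegrable (fun t : ℝ => t ^ m / Real.sqrt (4 * t - 1)) volume (1/4 : ℝ) 1 := by
  have h0 : IntervalIntegrable (fun t : ℝ => (4:ℝ) ^ m.natAbs *
      ((1/2) * (t - 1/4) ^ (-(1:ℝ)/2))) volume (1/4 : ℝ) 1 := by
    have := (intervalIntegrable_rpow' (a := 0) (b := 3/4)
      (r := -(1:ℝ)/2) (by norm_num)).comp_sub_right (1/4)
    norm_num at this ⊢
    exact (this.const_mul _).const_mul _
  have hIoc : Set.uIoc (1/4 : ℝ) 1 = Set.Ioc (1/4:ℝ) 1 := Set.uIoc_of_le (by norm_num)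
  apply h0.mono_fun'
  · rw [hIoc]
    apply ContinuousOn.aestronglyMeasurable ?_ measurableSet_Ioc
    apply ContinuousOn.div
    · exact continuousOn_id.zpow₀ m fun x hx =>
        Or.inl ((lt_trans (by norm_num) hx.1).ne' : x ≠ 0)
    · exact (Real.continuous_sqrt.comp (by fun_prop)).continuousOn
    · intro x hx
      have : (0:ℝ) < 4 * x - 1 := by linarith [hx.1]
      exact Real.sqrt_ne_zero'.mpr this
  · rw [Filter.EventuallyLE, ae_restrict_iff' measurableSet_uIoc]
    refine Filter.Eventually.of_forall fun t ht => ?_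
    rw [Set.uIoc_of_le (by norm_num : (1/4:ℝ) ≤ 1)] at ht
    obtain ⟨ht4, ht1⟩ := ht
    have ht0 : (0:ℝ) < t := lt_trans (by norm_num) ht4
    have hd : (0:ℝ) < t - 1/4 := by linarith
    have hs : Real.sqrt (4 * t - 1) = 2 * Real.sqrt (t - 1/4) := by
      rw [show 4 * t - 1 = 4 * (t - 1/4) by ring, show (4:ℝ) = 2^2 by norm_num,
        Real.sqrt_mul (by positivity), Real.sqrt_sq (by norm_num)]
    have hrpow : (t - 1/4) ^ (-(1:ℝ)/2) = (Real.sqrt (t - 1/4))⁻¹ := by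
      rw [show -(1:ℝ)/2 = -(1/2) by ring, Real.rpow_neg hd.le, Real.sqrt_eq_rpow]
    have hsp : (0:ℝ) < Real.sqrt (t - 1/4) := Real.sqrt_pos.mpr hd
    have hfnn : (0:ℝ) ≤ t ^ m / Real.sqrt (4 * t - 1) := by positivity
    simp only [Real.norm_eq_abs, abs_of_nonneg hfnn]
    rw [hs, hrpow]
    have hb := aux_zpow_le m ht4 ht1
    rw [div_le_iff₀ (by positivity)]
    calc t ^ m ≤ (4:ℝ) ^ m.natAbs := hb
      _ = (4:ℝ) ^ m.natAbs * ((1/2) * (Real.sqrt (t - 1/4))⁻¹) * (2 * Real.sqrt (t - 1/4)) := by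
          have h1 : Real.sqrt (t - 1/4) ≠ 0 := hsp.ne'
          field_simp
          rw [div_self (Real.sqrt_ne_zero'.mpr (by linarith : (0:ℝ) < (t * 4 - 1) / 4))]

/-- For every integer `q ≥ 2`, the integrals `I_{−q} = ∫_{1/4}^{1} t^{−q} (4t−1)^{−1/2} dt`
satisfy `I_{−q} = √3/(q−1) + (2(2q−3)/(q−1)) · I_{−(q−1)}`. -/
theorem integral_Im_recurrence (q : ℕ) (hq : 2 ≤ q) :
    ∫ t in (1/4 : ℝ)..1, t ^ (-(q : ℤ)) / Real.sqrt (4 * t - 1) =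
      Real.sqrt 3 / ((q : ℝ) - 1) +
        (2 * (2 * (q : ℝ) - 3) / ((q : ℝ) - 1)) *
          ∫ t in (1/4 : ℝ)..1, t ^ (-((q : ℤ) - 1)) / Real.sqrt (4 * t - 1) := by
  have hqR : (2:ℝ) ≤ (q:ℝ) := by exact_mod_cast hq
  have hq1 : (q:ℝ) - 1 ≠ 0 := by linarith
  set m : ℤ := -(q : ℤ) + 1 with hm
  have hm' : -((q : ℤ) - 1) = m := by ring
  set F : ℝ → ℝ := fun t => Real.sqrt (4 * t - 1) * t ^ m with hF
  set G : ℝ → ℝ := fun t => ((q:ℝ) - 1) * (t ^ (-(q:ℤ)) / Real.sqrt (4 * t - 1))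
      - (2 * (2 * (q:ℝ) - 3)) * (t ^ m / Real.sqrt (4 * t - 1)) with hG
  have hIq := aux_integrable (-(q:ℤ))
  have hIq1 := aux_integrable m
  have hGint : IntervalIntegrable G volume (1/4 : ℝ) 1 := by
    exact (hIq.const_mul _).sub (hIq1.const_mul _)
  have hcont : ContinuousOn F (Icc (1/4 : ℝ) 1) := by
    apply ContinuousOn.mul (Real.continuous_sqrt.comp (by fun_prop)).continuousOn
    exact (continuousOn_id).zpow₀ m fun x hx => Or.inl (by linarith [hx.1] : x ≠ 0)
  have hderiv : ∀ t ∈ Ioo (1/4 : ℝ) 1, HasDerivAt F (G t) t := by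
    intro t ht
    have ht0 : (0:ℝ) < t := lt_trans (by norm_num) ht.1
    have hpos : (0:ℝ) < 4 * t - 1 := by linarith [ht.1]
    have h1 : HasDerivAt (fun t : ℝ => 4 * t - 1) 4 t := by
      simpa using ((hasDerivAt_id t).const_mul 4).sub_const 1
    have hsqrt : HasDerivAt (fun t : ℝ => Real.sqrt (4 * t - 1))
        (4 / (2 * Real.sqrt (4 * t - 1))) t := h1.sqrt hpos.ne'
    have hzpow : HasDerivAt (fun t : ℝ => t ^ m) ((m : ℝ) * t ^ (m - 1)) t :=
      hasDerivAt_zpow m t (Or.inl ht0.ne')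
    have := hsqrt.mul hzpow
    convert this using 1
    case e'_4 => rfl
    case e'_5 => rfl
    case e'_8 => rfl
    have hs : Real.sqrt (4 * t - 1) ≠ 0 := (Real.sqrt_pos.mpr hpos).ne'
    have hs2 : Real.sqrt (4 * t - 1) * Real.sqrt (4 * t - 1) = 4 * t - 1 :=
      Real.mul_self_sqrt hpos.le
    have hsub : t ^ (m - 1) = t ^ m * t⁻¹ := zpow_sub_one₀ ht0.ne' m
    have hmq : t ^ (-(q:ℤ)) = t ^ m * t⁻¹ := by
      rw [← hsub]; congr 1; rw [hm]; ring
    have hmR : ((m : ℤ) : ℝ) = 1 - (q:ℝ) := by rw [hm]; push_cast; ring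
    show ((q:ℝ) - 1) * (t ^ (-(q:ℤ)) / Real.sqrt (4*t-1))
        - 2 * (2*(q:ℝ) - 3) * (t ^ m / Real.sqrt (4*t-1)) = _
    rw [hmq, hsub, hmR]
    have hsi : Real.sqrt (4 * t - 1) * (Real.sqrt (4 * t - 1))⁻¹ = 1 := mul_inv_cancel₀ hs
    have hti : t * t⁻¹ = 1 := mul_inv_cancel₀ ht0.ne'
    linear_combination ((q:ℝ) - 1) * t ^ m * (4 * (Real.sqrt (4 * t - 1))⁻¹ * hti
      + (Real.sqrt (4 * t - 1))⁻¹ * t⁻¹ * hs2 - Real.sqrt (4 * t - 1) * t⁻¹ * hsi)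
  have key : ∫ t in (1/4 : ℝ)..1, G t = Real.sqrt 3 := by
    rw [integral_eq_sub_of_hasDerivAt_of_le (by norm_num) hcont hderiv hGint]
    have : Real.sqrt (4 * (1/4 : ℝ) - 1) = 0 := by norm_num
    simp [hF, this]
    norm_num
  rw [hG] at key
  rw [intervalIntegral.integral_sub ((hIq.const_mul _)) ((hIq1.const_mul _)),
    intervalIntegral.integral_const_mul, intervalIntegral.integral_const_mul] at key
  rw [hm', div_mul_eq_mul_div, ← add_div, eq_div_iff hq1]
  linear_combination key
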